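/- Consider m agents with differentiable local objectives f_i, local gradient-descent operators D_i¹(x,y) = x - η_x ∇_x f_i(x,y) and gradient-ascent operators A_i¹(x,y) = y + η_y ∇_y f_i(x,y), with k-fold compositions D_i^k, A_i^k (and D_i⁰(x,y)=x, A_i⁰(x,y)=y). Define the iteration x^{t+1} = (1/m)∑_i D_i^K(x^t, y^t), y^{t+1} = (1/m)∑_i A_i^K(x^t,y^t). If the sequence (x^t, y^t) converges to (x*, y*), then (1/m) ∑_{i=1}^m ∑_{k=0}^{K-1} ∇ f_i(D_i^k(x*,y*), A_i^k(x*,y*)) = 0, where ∇f_i = (∇_x f_i, ∇_y f_i). -/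

import Mathlib

/-- Fixed points of Local SGDA with full gradients: if the averaged `K`-step local GDA
iteration converges to `(x*, y*)`, then
`(1/m) ∑ᵢ ∑_{k=0}^{K-1} ∇ fᵢ(Dᵢᵏ(x*, y*), Aᵢᵏ(x*, y*)) = 0`. -/
theorem stmt8 {p q : ℕ} (m K : ℕ) (hm : 0 < m) (hK : 1 ≤ K)
    (ηx ηy : ℝ) (hηx : 0 < ηx) (hηy : 0 < ηy)
    (f : Fin m → EuclideanSpace ℝ (Fin p) × EuclideanSpace ℝ (Fin q) → ℝ)
    (hf : ∀ i, Differentiable ℝ (f i))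
    (gx : Fin m → EuclideanSpace ℝ (Fin p) × EuclideanSpace ℝ (Fin q) → EuclideanSpace ℝ (Fin p))
    (gy : Fin m → EuclideanSpace ℝ (Fin p) × EuclideanSpace ℝ (Fin q) → EuclideanSpace ℝ (Fin q))
    (hgx : ∀ i x y, gx i (x, y) = gradient (fun u => f i (u, y)) x)
    (hgy : ∀ i x y, gy i (x, y) = gradient (fun v => f i (x, v)) y)
    (hgxc : ∀ i, Continuous (gx i)) (hgyc : ∀ i, Continuous (gy i))
    (step : Fin m → EuclideanSpace ℝ (Fin p) × EuclideanSpace ℝ (Fin q) →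
      EuclideanSpace ℝ (Fin p) × EuclideanSpace ℝ (Fin q))
    (hstep : ∀ i z, step i z = (z.1 - ηx • gx i z, z.2 + ηy • gy i z))
    (z : ℕ → EuclideanSpace ℝ (Fin p) × EuclideanSpace ℝ (Fin q))
    (hz : ∀ t, z (t + 1) =
      ((m : ℝ)⁻¹ • ∑ i, ((step i)^[K] (z t)).1, (m : ℝ)⁻¹ • ∑ i, ((step i)^[K] (z t)).2))
    (zs : EuclideanSpace ℝ (Fin p) × EuclideanSpace ℝ (Fin q))
    (hlim : Filter.Tendsto z Filter.atTop (nhds zs)) :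
    (m : ℝ)⁻¹ • ∑ i, ∑ k ∈ Finset.range K, gx i ((step i)^[k] zs) = 0 ∧
      (m : ℝ)⁻¹ • ∑ i, ∑ k ∈ Finset.range K, gy i ((step i)^[k] zs) = 0 := by
  classical
  -- continuity of step
  have hstep' : ∀ i, step i = fun w => (w.1 - ηx • gx i w, w.2 + ηy • gy i w) := by
    intro i; funext w; exact hstep i w
  have hcont : ∀ i, Continuous (step i) := by
    intro i; rw [hstep']
    exact (continuous_fst.sub ((hgxc i).const_smul ηx)).prodMk
      (continuous_snd.add ((hgyc i).const_smul ηy))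
  -- telescoping
  have htel : ∀ i (w : EuclideanSpace ℝ (Fin p) × EuclideanSpace ℝ (Fin q)) (k : ℕ),
      (step i)^[k] w = (w.1 - ηx • ∑ j ∈ Finset.range k, gx i ((step i)^[j] w),
        w.2 + ηy • ∑ j ∈ Finset.range k, gy i ((step i)^[j] w)) := by
    intro i w k
    induction k with
    | zero => simp
    | succ k ih =>
      rw [Function.iterate_succ_apply', hstep i]
      rw [Finset.sum_range_succ, Finset.sum_range_succ, smul_add, smul_add]
      simp only [ih, Prod.mk.injEq]
      constructor <;> module
  -- fixed point
  set F : EuclideanSpace ℝ (Fin p) × EuclideanSpace ℝ (Fin q) →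
      EuclideanSpace ℝ (Fin p) × EuclideanSpace ℝ (Fin q) :=
    fun w => ((m : ℝ)⁻¹ • ∑ i, ((step i)^[K] w).1, (m : ℝ)⁻¹ • ∑ i, ((step i)^[K] w).2) with hFdef
  have hFc : Continuous F := by
    apply Continuous.prodMk
    · exact (continuous_finset_sum _ fun i _ =>
        continuous_fst.comp ((hcont i).iterate K)).const_smul ((m : ℝ)⁻¹)
    · exact (continuous_finset_sum _ fun i _ =>
        continuous_snd.comp ((hcont i).iterate K)).const_smul ((m : ℝ)⁻¹)
  have hfix : zs = F zs := by
    have h1 : Filter.Tendsto (fun t => z (t + 1)) Filter.atTop (nhds zs) :=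
      hlim.comp (Filter.tendsto_add_atTop_nat 1)
    have h2 : Filter.Tendsto (fun t => F (z t)) Filter.atTop (nhds (F zs)) :=
      (hFc.tendsto zs).comp hlim
    have heq : (fun t => z (t + 1)) = fun t => F (z t) := by
      funext t; exact hz t
    rw [heq] at h1
    exact tendsto_nhds_unique h1 h2
  have hm' : (m : ℝ) ≠ 0 := Nat.cast_ne_zero.mpr hm.ne'
  have hfix1 : zs.1 = (F zs).1 := by rw [← hfix]
  have hfix2 : zs.2 = (F zs).2 := by rw [← hfix]
  constructor
  · have : zs.1 = (m : ℝ)⁻¹ • ∑ i, (zs.1 - ηx • ∑ k ∈ Finset.range K, gx i ((step i)^[k] zs)) := by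
      conv_lhs => rw [hfix1]
      simp only [hFdef]
      congr 1
      apply Finset.sum_congr rfl
      intro i _
      rw [htel i zs K]
    rw [Finset.sum_sub_distrib, Finset.sum_const, Finset.card_univ, Fintype.card_fin,
      smul_sub, ← Finset.smul_sum, smul_smul, ← Nat.cast_smul_eq_nsmul ℝ, smul_smul,
      inv_mul_cancel₀ hm', one_smul] at this
    have h0 := sub_eq_self.mp this.symm
    have hc : (0:ℝ) < (m : ℝ)⁻¹ * ηx := by positivity
    rcases smul_eq_zero.mp h0 with h | h
    · exact absurd h hc.ne'
    · rw [h, smul_zero]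
  · have : zs.2 = (m : ℝ)⁻¹ • ∑ i, (zs.2 + ηy • ∑ k ∈ Finset.range K, gy i ((step i)^[k] zs)) := by
      conv_lhs => rw [hfix2]
      simp only [hFdef]
      congr 1
      apply Finset.sum_congr rfl
      intro i _
      rw [htel i zs K]
    rw [Finset.sum_add_distrib, Finset.sum_const, Finset.card_univ, Fintype.card_fin,
      smul_add, ← Finset.smul_sum, smul_smul, ← Nat.cast_smul_eq_nsmul ℝ, smul_smul,
      inv_mul_cancel₀ hm', one_smul] at this
    have h0 := left_eq_add.mp this
    have hc : (0:ℝ) < (m : ℝ)⁻¹ * ηy := by positivity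
    rcases smul_eq_zero.mp h0 with h | h
    · exact absurd h hc.ne'
    · rw [h, smul_zero]
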